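/- arXiv:0801.4557 — 5 statements merged into one kernel-verified Lean document; each statement's English description precedes it below -/
import Mathlib

section
/- For α ∈ (0,1), the series ∑_{k≥1} a_k with a_k := (-1)^(k-1) * binomial(α,k) converges and its sum equals 1. -/
/-- The generalized binomial coefficient `binomial α k = α(α-1)⋯(α-(k-1))/k!`. -/
noncomputable def genBinom (α : ℝ) (k : ℕ) : ℝ :=
  (∏ j ∈ Finset.range k, (α - j)) / (Nat.factorial k)

/-- `a_k = (-1)^(k-1) * binomial(α,k)`. -/
noncomputable def aCoeff (α : ℝ) (k : ℕ) : ℝ := (-1 : ℝ) ^ (k - 1) * genBinom α k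

private noncomputable def bProd (α : ℝ) (n : ℕ) : ℝ :=
  ∏ j ∈ Finset.range n, (1 - α / (j + 1))

private lemma factor_nonneg {α : ℝ} (hα : α ∈ Set.Ioo (0 : ℝ) 1) (j : ℕ) :
    0 ≤ 1 - α / (j + 1 : ℝ) := by
  have hj : (0:ℝ) < j + 1 := by positivity
  have hjc : (0:ℝ) ≤ j := j.cast_nonneg
  have : α / (j + 1 : ℝ) ≤ 1 := by
    rw [div_le_one hj]; linarith [hα.2]
  linarith

private lemma key_lemma (α : ℝ) (n : ℕ) :
    (-1 : ℝ) ^ n * ∏ j ∈ Finset.range n, (α - (j + 1))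
      = ∏ j ∈ Finset.range n, ((j + 1) - α) := by
  induction n with
  | zero => simp
  | succ m ih =>
      rw [Finset.prod_range_succ, Finset.prod_range_succ, pow_succ, ← ih]
      ring

private lemma bProd_eq (α : ℝ) (n : ℕ) :
    bProd α n = (∏ j ∈ Finset.range n, ((j + 1 : ℝ) - α)) / n.factorial := by
  induction n with
  | zero => simp [bProd]
  | succ m ih =>
      have h1 : ((m:ℝ) + 1) ≠ 0 := by positivity
      have h2 : (m.factorial : ℝ) ≠ 0 := Nat.cast_ne_zero.mpr m.factorial_ne_zero
      rw [bProd, Finset.prod_range_succ, ← bProd, ih, Finset.prod_range_succ,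
        Nat.factorial_succ]
      push_cast
      field_simp

private lemma aCoeff_eq (α : ℝ) (n : ℕ) :
    aCoeff α (n + 1) = bProd α n * (α / (n + 1)) := by
  have hfac : ((n + 1).factorial : ℝ) = (n.factorial : ℝ) * (n + 1) := by
    rw [Nat.factorial_succ]; push_cast; ring
  have hprod : ∏ j ∈ Finset.range (n + 1), (α - j)
      = α * ∏ j ∈ Finset.range n, (α - (j + 1)) := by
    rw [Finset.prod_range_succ']; push_cast; ring
  unfold aCoeff genBinom
  simp only [Nat.add_sub_cancel]
  rw [hprod, hfac, bProd_eq, ← key_lemma]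
  have h1 : ((n : ℝ) + 1) ≠ 0 := by positivity
  have h2 : (n.factorial : ℝ) ≠ 0 := Nat.cast_ne_zero.mpr n.factorial_ne_zero
  field_simp

private lemma bProd_nonneg {α : ℝ} (hα : α ∈ Set.Ioo (0 : ℝ) 1) (n : ℕ) :
    0 ≤ bProd α n :=
  Finset.prod_nonneg fun j _ => factor_nonneg hα j

private lemma partial_sum_eq (α : ℝ) (n : ℕ) :
    ∑ k ∈ Finset.range n, aCoeff α (k + 1) = 1 - bProd α n := by
  induction n with
  | zero => simp [bProd]
  | succ m ih =>
      rw [Finset.sum_range_succ, ih, aCoeff_eq]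
      have : bProd α (m + 1) = bProd α m * (1 - α / (m + 1)) := Finset.prod_range_succ _ _
      rw [this]; ring

private lemma bProd_tendsto_zero {α : ℝ} (hα : α ∈ Set.Ioo (0 : ℝ) 1) :
    Filter.Tendsto (bProd α) Filter.atTop (nhds 0) := by
  have hle : ∀ n, bProd α n ≤ Real.exp (-α * ∑ j ∈ Finset.range n, (1 / (j + 1) : ℝ)) := by
    intro n
    rw [Finset.mul_sum, Real.exp_sum]
    apply Finset.prod_le_prod (fun j _ => factor_nonneg hα j)
    intro j _
    have := Real.add_one_le_exp (-α * (1 / (j + 1 : ℝ)))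
    have hrw : -α * (1 / (j + 1 : ℝ)) + 1 = 1 - α / (j + 1 : ℝ) := by ring
    linarith [hrw ▸ this]
  have hexp : Filter.Tendsto
      (fun n => Real.exp (-α * ∑ j ∈ Finset.range n, (1 / (j + 1) : ℝ)))
      Filter.atTop (nhds 0) := by
    apply Real.tendsto_exp_atBot.comp
    apply Filter.Tendsto.const_mul_atTop_of_neg (by linarith [hα.1])
    exact Real.tendsto_sum_range_one_div_nat_succ_atTop
  exact squeeze_zero (bProd_nonneg hα) hle hexp

/-- for `α ∈ (0,1)`, `∑_{k≥1} a_k = 1` (the series converges with sum 1). -/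
theorem aCoeff_hasSum_one (α : ℝ) (hα : α ∈ Set.Ioo (0 : ℝ) 1) :
    HasSum (fun k : ℕ => aCoeff α (k + 1)) 1 := by
  have hnn : ∀ k : ℕ, 0 ≤ aCoeff α (k + 1) := by
    intro k
    rw [aCoeff_eq]
    have h2 : (0:ℝ) ≤ α / (k + 1) := by
      have := hα.1.le
      positivity
    exact mul_nonneg (bProd_nonneg hα k) h2
  rw [hasSum_iff_tendsto_nat_of_nonneg hnn]
  simp only [partial_sum_eq]
  have := (bProd_tendsto_zero hα).const_sub 1
  simpa using this
end

section
/- Let T be a power-bounded operator on a complex Banach space X and F : ℤ≥0 → ℂ absolutely summable. Then the spectrum of Ψ(F;T) := ∑_{k≥0} F(k)T^k equals φ_F(σ(T)), where φ_F(w) := ∑_{k≥0} F(k)w^k for |w| ≤ 1. -/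
set_option maxHeartbeats 1000000
set_option synthInstance.maxHeartbeats 400000

open WeakDual

namespace PsiSpectralAux

variable {X : Type*} [NormedAddCommGroup X] [NormedSpace ℂ X] [CompleteSpace X]

/-- The bicommutant of `{T}` inside `X →L[ℂ] X`. -/
noncomputable def bico (T : X →L[ℂ] X) : Subalgebra ℂ (X →L[ℂ] X) :=
  Subalgebra.centralizer ℂ (Set.centralizer {T})

lemma T_mem_centralizer (T : X →L[ℂ] X) : T ∈ Set.centralizer {T} := by
  intro m hm
  rw [Set.mem_singleton_iff] at hm
  rw [hm]

lemma T_mem (T : X →L[ℂ] X) : T ∈ bico T := by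
  rw [bico, Subalgebra.mem_centralizer_iff]
  intro g hg
  exact (hg T rfl).symm

lemma mem_comm (T : X →L[ℂ] X) {x : X →L[ℂ] X} (hx : x ∈ bico T)
    {g : X →L[ℂ] X} (hg : g ∈ Set.centralizer {T}) : g * x = x * g := by
  rw [bico, Subalgebra.mem_centralizer_iff] at hx
  exact hx g hg

lemma coe_mem_centralizer (T : X →L[ℂ] X) (b : bico T) :
    (b : X →L[ℂ] X) ∈ Set.centralizer {T} := by
  intro m hm
  rw [Set.mem_singleton_iff] at hm
  rw [hm]
  exact mem_comm T b.2 (T_mem_centralizer T)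

lemma bico_comm (T : X →L[ℂ] X) (a b : bico T) : a * b = b * a := by
  ext1
  exact (mem_comm T a.2 (coe_mem_centralizer T b)).symm

lemma bico_isClosed (T : X →L[ℂ] X) : IsClosed ((bico T : Subalgebra ℂ (X →L[ℂ] X)) :
    Set (X →L[ℂ] X)) := by
  have h : ((bico T : Subalgebra ℂ (X →L[ℂ] X)) : Set (X →L[ℂ] X)) =
      ⋂ g ∈ Set.centralizer {T}, {x : X →L[ℂ] X | g * x = x * g} := by
    ext x
    simp only [SetLike.mem_coe, bico, Subalgebra.mem_centralizer_iff, Set.mem_iInter,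
      Set.mem_setOf_eq]
  rw [h]
  exact isClosed_biInter fun g _ =>
    isClosed_eq (continuous_const.mul continuous_id) (continuous_id.mul continuous_const)

noncomputable instance (T : X →L[ℂ] X) : NormedCommRing (bico T) :=
  { Subalgebra.normedRing (bico T) with mul_comm := bico_comm T }

instance (T : X →L[ℂ] X) : CompleteSpace (bico T) :=
  (bico_isClosed T).completeSpace_coe

lemma isUnit_of (T : X →L[ℂ] X) (a : bico T) (h : IsUnit (a : X →L[ℂ] X)) :
    IsUnit a := by
  obtain ⟨u, hu⟩ := h
  have hinv : (↑u⁻¹ : X →L[ℂ] X) ∈ bico T := by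
    rw [bico, Subalgebra.mem_centralizer_iff]
    intro g hg
    have h1 : g * (a : X →L[ℂ] X) = (a : X →L[ℂ] X) * g := mem_comm T a.2 hg
    rw [← hu] at h1
    calc g * ↑u⁻¹ = ↑u⁻¹ * ↑u * g * ↑u⁻¹ := by rw [u.inv_mul, one_mul]
      _ = ↑u⁻¹ * (↑u * g) * ↑u⁻¹ := by rw [mul_assoc (↑u⁻¹ : X →L[ℂ] X)]
      _ = ↑u⁻¹ * (g * ↑u) * ↑u⁻¹ := by rw [h1]
      _ = ↑u⁻¹ * g * (↑u * ↑u⁻¹) := by simp only [mul_assoc]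
      _ = ↑u⁻¹ * g := by rw [u.mul_inv, mul_one]
  refine ⟨⟨a, ⟨(↑u⁻¹ : X →L[ℂ] X), hinv⟩, ?_, ?_⟩, rfl⟩
  · ext1; simp [← hu, u.mul_inv]
  · ext1; simp [← hu, u.inv_mul]

lemma spec_eq (T : X →L[ℂ] X) (a : bico T) :
    spectrum ℂ a = spectrum ℂ (a : X →L[ℂ] X) := by
  refine Set.Subset.antisymm ?_ (spectrum.subset_subalgebra a)
  intro z hz
  rw [spectrum.mem_iff] at hz ⊢
  intro hcon
  apply hz
  have hco : ((algebraMap ℂ (bico T) z - a : bico T) : X →L[ℂ] X) =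
      algebraMap ℂ (X →L[ℂ] X) z - (a : X →L[ℂ] X) := by
    push_cast
    rfl
  exact isUnit_of T _ (hco ▸ hcon)

end PsiSpectralAux

open PsiSpectralAux in
/-- spectral mapping theorem for subordination: if `T` is power-bounded and
`F` absolutely summable, then `σ(Ψ(F;T)) = φ_F(σ(T))` where `φ_F(w) = ∑_k F(k) w^k`. -/
theorem psi_spectral_mapping
    {X : Type*} [NormedAddCommGroup X] [NormedSpace ℂ X] [CompleteSpace X] [Nontrivial X]
    (T : X →L[ℂ] X) (hT : ∃ C : ℝ, ∀ n : ℕ, ‖T ^ n‖ ≤ C)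
    (F : ℕ → ℂ) (hF : Summable fun k => ‖F k‖) :
    spectrum ℂ (∑' k : ℕ, F k • T ^ k) =
      (fun z : ℂ => ∑' k : ℕ, F k * z ^ k) '' spectrum ℂ T := by
  classical
  obtain ⟨C, hC⟩ := hT
  set t : bico T := ⟨T, T_mem T⟩ with ht
  -- summability in the bicommutant
  have hnorm : ∀ k, ‖F k • t ^ k‖ ≤ ‖F k‖ * C := by
    intro k
    have h1 : ‖F k • t ^ k‖ = ‖F k • T ^ k‖ := rfl
    rw [h1]
    exact le_trans (ContinuousLinearMap.opNorm_smul_le (F k) (T ^ k))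
      (mul_le_mul_of_nonneg_left (hC k) (norm_nonneg _))
  have hsum : Summable fun k => F k • t ^ k :=
    Summable.of_norm_bounded (hF.mul_right C) hnorm
  -- the coercion of the sum
  have hcoe : ((∑' k : ℕ, F k • t ^ k : bico T) : X →L[ℂ] X) = ∑' k : ℕ, F k • T ^ k := by
    let φ : bico T →+ (X →L[ℂ] X) := AddMonoidHom.mk' (fun x => (x : X →L[ℂ] X))
      (fun _ _ => rfl)
    have := (hsum.hasSum.map φ continuous_subtype_val).tsum_eq
    exact this.symm
  -- character description of the spectrum of the sum
  have hφsum : ∀ φ : characterSpace ℂ (bico T),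
      φ (∑' k : ℕ, F k • t ^ k) = ∑' k : ℕ, F k * (φ t) ^ k := by
    intro φ
    have h1 := (hsum.hasSum.map (AddMonoidHomClass.toAddMonoidHom φ) (map_continuous φ)).tsum_eq
    simpa [Function.comp, map_smul, map_pow, smul_eq_mul] using h1.symm
  have key : spectrum ℂ (∑' k : ℕ, F k • T ^ k) =
      Set.range (fun φ : characterSpace ℂ (bico T) => ∑' k : ℕ, F k * (φ t) ^ k) := by
    rw [← hcoe, ← spec_eq]
    ext z
    have := WeakDual.CharacterSpace.mem_spectrum_iff_exists (A := bico T) (a := ∑' k : ℕ, F k • t ^ k) (z := z)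
    rw [this]
    constructor
    · rintro ⟨φ, hφ⟩
      exact ⟨φ, (hφsum φ).symm.trans hφ⟩
    · rintro ⟨φ, hφ⟩
      exact ⟨φ, (hφsum φ).trans hφ⟩
  have hTspec : spectrum ℂ T = Set.range (fun φ : characterSpace ℂ (bico T) => φ t) := by
    have h1 : spectrum ℂ T = spectrum ℂ t := (spec_eq T t).symm
    rw [h1]
    ext z
    have := WeakDual.CharacterSpace.mem_spectrum_iff_exists (A := bico T) (a := t) (z := z)
    rw [this]
    constructor
    · rintro ⟨φ, hφ⟩; exact ⟨φ, hφ⟩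
    · rintro ⟨φ, hφ⟩; exact ⟨φ, hφ⟩
  rw [key, hTspec, ← Set.range_comp]
  rfl
end

section
/- If S₁, S₂ are commuting bounded operators on a complex Banach space, then the Hausdorff distance between σ(S₁) and σ(S₂) is at most ‖S₁ - S₂‖. -/
open scoped ENNReal NNReal
open Filter

lemma spectralRadius_mul_le_of_commute {A : Type*} [NormedRing A] [NormedAlgebra ℂ A]
    [CompleteSpace A] [NormOneClass A] {a b : A} (h : Commute a b) :
    spectralRadius ℂ (a * b) ≤ spectralRadius ℂ a * spectralRadius ℂ b := by
  have ta := spectrum.pow_nnnorm_pow_one_div_tendsto_nhds_spectralRadius a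
  have tb := spectrum.pow_nnnorm_pow_one_div_tendsto_nhds_spectralRadius b
  have tab := spectrum.pow_nnnorm_pow_one_div_tendsto_nhds_spectralRadius (a * b)
  have hfa : spectralRadius ℂ a ≠ ⊤ :=
    ((spectrum.spectralRadius_le_nnnorm a).trans_lt ENNReal.coe_lt_top).ne
  have hfb : spectralRadius ℂ b ≠ ⊤ :=
    ((spectrum.spectralRadius_le_nnnorm b).trans_lt ENNReal.coe_lt_top).ne
  have tmul : Tendsto
      (fun n : ℕ => ((‖a ^ n‖₊ : ℝ≥0∞) ^ (1 / n : ℝ)) * ((‖b ^ n‖₊ : ℝ≥0∞) ^ (1 / n : ℝ)))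
      atTop (nhds (spectralRadius ℂ a * spectralRadius ℂ b)) :=
    ENNReal.Tendsto.mul ta (Or.inr hfb) tb (Or.inr hfa)
  refine le_of_tendsto_of_tendsto' tab tmul fun n => ?_
  have h1 : ‖(a * b) ^ n‖₊ ≤ ‖a ^ n‖₊ * ‖b ^ n‖₊ := by
    rw [h.mul_pow]; exact nnnorm_mul_le _ _
  calc ((‖(a * b) ^ n‖₊ : ℝ≥0∞)) ^ (1 / n : ℝ)
      ≤ ((‖a ^ n‖₊ * ‖b ^ n‖₊ : ℝ≥0) : ℝ≥0∞) ^ (1 / n : ℝ) := by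
        exact ENNReal.rpow_le_rpow (by exact_mod_cast h1) (by positivity)
    _ = ((‖a ^ n‖₊ : ℝ≥0∞) ^ (1 / n : ℝ)) * ((‖b ^ n‖₊ : ℝ≥0∞) ^ (1 / n : ℝ)) := by
        rw [ENNReal.coe_mul, ENNReal.mul_rpow_of_nonneg _ _ (by positivity)]

lemma infDist_le_of_mem_spectrum {X : Type*} [NormedAddCommGroup X] [NormedSpace ℂ X]
    [CompleteSpace X] [Nontrivial X] (S₁ S₂ : X →L[ℂ] X) (hcomm : Commute S₁ S₂)
    {lam : ℂ} (hlam : lam ∈ spectrum ℂ S₁) :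
    Metric.infDist lam (spectrum ℂ S₂) ≤ ‖S₁ - S₂‖ := by
  by_contra hlt
  push_neg at hlt
  set d := Metric.infDist lam (spectrum ℂ S₂) with hd
  have hr0 : (0 : ℝ) ≤ ‖S₁ - S₂‖ := norm_nonneg _
  have hd0 : 0 < d := lt_of_le_of_lt hr0 hlt
  -- lam ∉ σ S₂
  have hnot : lam ∉ spectrum ℂ S₂ := fun h => by
    simp [hd, Metric.infDist_zero_of_mem h] at hd0
  rw [spectrum.notMem_iff] at hnot
  obtain ⟨u, hu⟩ := hnot
  -- spectral radius of u⁻¹ is at most 1/d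
  have hinv : spectralRadius ℂ ((u⁻¹ : (X →L[ℂ] X)ˣ) : X →L[ℂ] X) ≤ ENNReal.ofReal (1 / d) := by
    rw [spectralRadius]
    refine iSup₂_le fun z hz => ?_
    have hz0 : z ≠ 0 := by
      rintro rfl
      exact (spectrum.zero_mem_iff ℂ).mp hz (u⁻¹).isUnit
    have h2 := (spectrum.inv_mem_iff (r := Units.mk0 z hz0) (a := u⁻¹)).mp
      (by simpa using hz)
    rw [inv_inv] at h2
    have h3 : z⁻¹ ∈ spectrum ℂ ((algebraMap ℂ (X →L[ℂ] X)) lam - S₂) := by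
      simpa [hu] using h2
    rw [← spectrum.singleton_sub_eq] at h3
    obtain ⟨l, hl, mu, hmu, hsum⟩ := h3
    simp only [Set.mem_singleton_iff] at hl
    rw [hl] at hsum
    have hdle : d ≤ ‖z‖⁻¹ := by
      have h4 : d ≤ dist lam mu := Metric.infDist_le_dist_of_mem hmu
      rw [dist_eq_norm] at h4
      calc d ≤ ‖lam - mu‖ := h4
        _ = ‖z‖⁻¹ := by rw [show lam - mu = z⁻¹ from hsum, norm_inv]
    have hzle : ‖z‖ ≤ 1 / d := by
      rw [le_div_iff₀ hd0]
      have hz0' : 0 < ‖z‖ := norm_pos_iff.mpr hz0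
      calc ‖z‖ * d ≤ ‖z‖ * ‖z‖⁻¹ := by gcongr
        _ = 1 := mul_inv_cancel₀ hz0'.ne'
    rw [← ENNReal.ofReal_coe_nnreal]
    exact ENNReal.ofReal_le_ofReal (by simpa using hzle)
  -- commute facts
  have hc1 : Commute ((u⁻¹ : (X →L[ℂ] X)ˣ) : X →L[ℂ] X) (S₁ - S₂) := by
    refine Commute.units_inv_left ?_
    rw [hu]
    have halg : Commute ((algebraMap ℂ (X →L[ℂ] X)) lam) (S₁ - S₂) :=
      Algebra.commutes lam (S₁ - S₂)
    have hS2 : Commute S₂ (S₁ - S₂) := (hcomm.symm).sub_right (Commute.refl S₂)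
    exact halg.sub_left hS2
  -- spectral radius estimate for the product
  have hprod : spectralRadius ℂ (((u⁻¹ : (X →L[ℂ] X)ˣ) : X →L[ℂ] X) * (S₁ - S₂)) < 1 := by
    calc spectralRadius ℂ (((u⁻¹ : (X →L[ℂ] X)ˣ) : X →L[ℂ] X) * (S₁ - S₂))
        ≤ spectralRadius ℂ ((u⁻¹ : (X →L[ℂ] X)ˣ) : X →L[ℂ] X) * spectralRadius ℂ (S₁ - S₂) :=
          spectralRadius_mul_le_of_commute hc1
      _ ≤ ENNReal.ofReal (1 / d) * ENNReal.ofReal ‖S₁ - S₂‖ := by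
          exact mul_le_mul' hinv (le_of_le_of_eq (spectrum.spectralRadius_le_nnnorm _)
            (ofReal_norm _).symm)
      _ = ENNReal.ofReal ((1 / d) * ‖S₁ - S₂‖) := (ENNReal.ofReal_mul (by positivity)).symm
      _ < 1 := by
          rw [← ENNReal.ofReal_one]
          apply ENNReal.ofReal_lt_ofReal_iff_of_nonneg (by positivity) |>.mpr
          rw [div_mul_eq_mul_div, one_mul, div_lt_one hd0]
          exact hlt
  -- 1 is in the resolvent set
  have hone : IsUnit ((algebraMap ℂ (X →L[ℂ] X)) 1 -
      ((u⁻¹ : (X →L[ℂ] X)ˣ) : X →L[ℂ] X) * (S₁ - S₂)) := by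
    have := spectrum.mem_resolventSet_of_spectralRadius_lt (a :=
      ((u⁻¹ : (X →L[ℂ] X)ˣ) : X →L[ℂ] X) * (S₁ - S₂)) (k := (1 : ℂ)) (by simpa using hprod)
    rwa [spectrum.mem_resolventSet_iff] at this
  -- conclude lam ∉ σ S₁, contradiction
  have hfac : (algebraMap ℂ (X →L[ℂ] X)) lam - S₁ =
      (u : X →L[ℂ] X) * ((algebraMap ℂ (X →L[ℂ] X)) 1 -
        ((u⁻¹ : (X →L[ℂ] X)ˣ) : X →L[ℂ] X) * (S₁ - S₂)) := by
    rw [mul_sub, ← mul_assoc, Units.mul_inv, one_mul, map_one, mul_one, hu]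
    abel
  have : IsUnit ((algebraMap ℂ (X →L[ℂ] X)) lam - S₁) := by
    rw [hfac]; exact u.isUnit.mul hone
  exact (spectrum.notMem_iff.mpr this) hlam



/-- for commuting bounded operators `S₁, S₂` on a complex Banach space, the
Hausdorff distance between their spectra is at most `‖S₁ - S₂‖`. -/
theorem spectrum_hausdorffDist_le
    {X : Type*} [NormedAddCommGroup X] [NormedSpace ℂ X] [CompleteSpace X]
    (S₁ S₂ : X →L[ℂ] X) (hcomm : Commute S₁ S₂) :
    Metric.hausdorffDist (spectrum ℂ S₁) (spectrum ℂ S₂) ≤ ‖S₁ - S₂‖ := by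
  rcases subsingleton_or_nontrivial X with hX | hX
  · have : S₁ = S₂ := Subsingleton.elim _ _
    subst this
    simp [Metric.hausdorffDist_self_zero]
  · exact Metric.hausdorffDist_le_of_infDist (norm_nonneg _)
      (fun x hx => infDist_le_of_mem_spectrum S₁ S₂ hcomm hx)
      (fun x hx => by
        simpa [norm_sub_rev] using infDist_le_of_mem_spectrum S₂ S₁ hcomm.symm hx)
end

section
/- With F(k) = 1/(k(k-1)) for k ≥ 2 and F(0)=F(1)=0, the argument of 1 - F̂(ξ) satisfies lim_{ξ→0} |Arg(1 - F̂(ξ))| = π/2, where F̂(ξ) = ∑_{k≥2} e^{-ikξ}/(k(k-1)). -/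
open Real Filter

/-- The Fourier transform `F̂(ξ) = ∑_{k≥2} e^{-ikξ}/(k(k-1))` of the probability
`F(k) = 1/(k(k-1))`, `k ≥ 2`. -/
noncomputable def logProbFourier (ξ : ℝ) : ℂ :=
  ∑' k : ℕ, Complex.exp (-Complex.I * (k + 2) * ξ) / ((k + 2) * (k + 1))

noncomputable def gfun (z : ℂ) : ℂ := ∑' k : ℕ, z ^ (k + 2) / ((k + 2) * (k + 1))

lemma summable_aux : Summable (fun k : ℕ => 1 / (((k : ℝ) + 2) * ((k : ℝ) + 1))) := by
  have h0 : Summable (fun n : ℕ => 1 / (n : ℝ) ^ 2) :=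
    Real.summable_one_div_nat_pow.mpr (by norm_num)
  have h : Summable (fun k : ℕ => 1 / ((k + 1 : ℕ) : ℝ) ^ 2) :=
    (summable_nat_add_iff (f := fun n : ℕ => 1 / (n : ℝ) ^ 2) 1).mpr h0
  refine Summable.of_nonneg_of_le (fun k => by positivity) (fun k => ?_) h
  push_cast
  rw [div_le_div_iff₀ (by positivity) (by positivity)]
  nlinarith [sq_nonneg ((k : ℝ) + 1)]

lemma gfun_eq_inner {z : ℂ} (hz : ‖z‖ < 1) :
    gfun z = z + (1 - z) * Complex.log (1 - z) := by
  have hL : HasSum (fun n : ℕ => z ^ n / n) (-Complex.log (1 - z)) :=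
    Complex.hasSum_taylorSeries_neg_log hz
  set L := -Complex.log (1 - z) with hLdef
  have h1 : HasSum (fun n : ℕ => z ^ (n + 1) / (n + 1 : ℕ)) L := by
    have := (hasSum_nat_add_iff' (f := fun n : ℕ => z ^ n / n) 1).mpr hL
    simpa using this
  have h2 : HasSum (fun n : ℕ => z ^ (n + 2) / (n + 2 : ℕ)) (L - z) := by
    have := (hasSum_nat_add_iff' (f := fun n : ℕ => z ^ n / n) 2).mpr hL
    have e : ∑ i ∈ Finset.range 2, z ^ i / (i : ℂ) = z := by
      simp [Finset.sum_range_succ]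
    rw [e] at this
    exact this
  have h3 : HasSum (fun n : ℕ => z * (z ^ (n + 1) / (n + 1 : ℕ)) - z ^ (n + 2) / (n + 2 : ℕ))
      (z * L - (L - z)) := (h1.mul_left z).sub h2
  have heq : (fun n : ℕ => z * (z ^ (n + 1) / (n + 1 : ℕ)) - z ^ (n + 2) / (n + 2 : ℕ))
      = fun n : ℕ => z ^ (n + 2) / ((n + 2) * (n + 1)) := by
    funext n
    have hn1 : ((n : ℂ) + 1) ≠ 0 := by
      have := Nat.cast_add_one_ne_zero (R := ℂ) n; exact_mod_cast this
    have hn2 : ((n : ℂ) + 2) ≠ 0 := by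
      have : ((n + 2 : ℕ) : ℂ) ≠ 0 := Nat.cast_ne_zero.mpr (by omega)
      push_cast at this; exact this
    push_cast
    field_simp
    ring
  rw [heq] at h3
  have : gfun z = z * L - (L - z) := h3.tsum_eq
  rw [this, hLdef]
  ring

lemma gfun_cont : ContinuousOn gfun (Metric.closedBall (0 : ℂ) 1) := by
  apply continuousOn_tsum (u := fun k : ℕ => 1 / (((k : ℝ) + 2) * ((k : ℝ) + 1)))
    (fun i => (Continuous.continuousOn (by continuity))) summable_aux
  intro n z hz
  rw [Metric.mem_closedBall, dist_zero_right] at hz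
  rw [norm_div, norm_pow]
  have h2 : (0:ℝ) < ((n : ℝ) + 2) * ((n : ℝ) + 1) := by positivity
  have : ‖((n : ℂ) + 2) * ((n : ℂ) + 1)‖ = ((n : ℝ) + 2) * ((n : ℝ) + 1) := by
    rw [norm_mul]
    have a : ((n : ℂ) + 2) = ((n + 2 : ℕ) : ℂ) := by push_cast; ring
    have b : ((n : ℂ) + 1) = ((n + 1 : ℕ) : ℂ) := by push_cast; ring
    rw [a, b, Complex.norm_natCast, Complex.norm_natCast]; push_cast; ring
  rw [this]
  gcongr
  exact pow_le_one₀ (norm_nonneg z) hz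

lemma gfun_eq_boundary {z : ℂ} (hz : ‖z‖ ≤ 1) (hre : z.re < 1) :
    gfun z = z + (1 - z) * Complex.log (1 - z) := by
  rcases lt_or_eq_of_le hz with h | h
  · exact gfun_eq_inner h
  · -- ‖z‖ = 1
    have hzball : z ∈ Metric.closedBall (0:ℂ) 1 := by
      rw [Metric.mem_closedBall, dist_zero_right]; exact hz
    have hcl : z ∈ closure (Metric.ball (0:ℂ) 1) := by
      rw [closure_ball (0:ℂ) one_ne_zero]; exact hzball
    have hne : (nhdsWithin z (Metric.ball (0:ℂ) 1)).NeBot :=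
      mem_closure_iff_nhdsWithin_neBot.mp hcl
    have hslit : (1 - z) ∈ Complex.slitPlane := by
      rw [Complex.mem_slitPlane_iff]; left; simpa using hre
    have hh : ContinuousAt (fun w : ℂ => w + (1 - w) * Complex.log (1 - w)) z := by
      have hlog : ContinuousAt Complex.log (1 - z) := continuousAt_clog hslit
      exact continuousAt_id.add (((continuousAt_const.sub continuousAt_id)).mul
        (hlog.comp (continuousAt_const.sub continuousAt_id)))
    have t1 : Tendsto gfun (nhdsWithin z (Metric.ball (0:ℂ) 1)) (nhds (gfun z)) :=
      (gfun_cont z hzball).mono Metric.ball_subset_closedBall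
    have t2 : Tendsto gfun (nhdsWithin z (Metric.ball (0:ℂ) 1))
        (nhds (z + (1 - z) * Complex.log (1 - z))) := by
      refine Tendsto.congr' ?_ (hh.continuousWithinAt.tendsto)
      filter_upwards [self_mem_nhdsWithin] with w hw
      rw [Metric.mem_ball, dist_zero_right] at hw
      exact (gfun_eq_inner hw).symm
    exact tendsto_nhds_unique t1 t2

lemma logProbFourier_eq (ξ : ℝ) :
    logProbFourier ξ = gfun (Complex.exp (-Complex.I * ξ)) := by
  unfold logProbFourier gfun
  congr 1; funext k
  congr 1
  rw [← Complex.exp_nat_mul]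
  congr 1
  push_cast
  ring

lemma closed_form (ξ : ℝ) (h1 : ξ ≠ 0) (h2 : |ξ| < 1) :
    logProbFourier ξ =
      Complex.exp (-Complex.I * ξ) + (1 - Complex.exp (-Complex.I * ξ)) *
        Complex.log (1 - Complex.exp (-Complex.I * ξ)) := by
  rw [logProbFourier_eq]
  apply gfun_eq_boundary
  · rw [Complex.norm_exp]
    simp
  · have hre : (Complex.exp (-Complex.I * ξ)).re = Real.cos ξ := by simp [Complex.exp_re]
    rw [hre]
    rcases lt_or_eq_of_le (Real.cos_le_one ξ) with h | h
    · exact h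
    · exfalso
      have hpi := Real.pi_gt_three
      rw [abs_lt] at h2
      exact h1 ((Real.cos_eq_one_iff_of_lt_of_lt (by linarith) (by linarith)).mp h)

lemma abs_arg_eq {w : ℂ} (hw : w ≠ 0) :
    |Complex.arg w| = Real.arccos (w.re / ‖w‖) := by
  rw [← Complex.cos_arg hw]
  rcases le_or_gt 0 (Complex.arg w) with h | h
  · rw [Real.arccos_cos h (Complex.arg_le_pi w), abs_of_nonneg h]
  · rw [← Real.cos_neg, Real.arccos_cos (by linarith) (by linarith [Complex.neg_pi_lt_arg w]),
      abs_of_neg h]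

/-- for `F(k) = 1/(k(k-1))`, `k ≥ 2`, one has
`lim_{ξ→0} |Arg(1 - F̂(ξ))| = π/2`. -/
theorem logProb_arg_limit :
    Tendsto (fun ξ : ℝ => |Complex.arg (1 - logProbFourier ξ)|)
      (nhdsWithin 0 {0}ᶜ) (nhds (π / 2)) := by
  set l := nhdsWithin (0:ℝ) {0}ᶜ with hl
  set z : ℝ → ℂ := fun ξ => Complex.exp (-Complex.I * ξ) with hz
  set u : ℝ → ℂ := fun ξ => 1 - z ξ with hudef
  set v : ℝ → ℂ := fun ξ => 1 - Complex.log (u ξ) with hvdef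
  -- basic eventual facts
  have hξ0 : ∀ᶠ ξ in l, ξ ≠ 0 := by
    filter_upwards [self_mem_nhdsWithin] with ξ hξ; exact hξ
  have hξ1 : ∀ᶠ ξ in l, |ξ| < 1 := by
    apply Filter.Eventually.filter_mono nhdsWithin_le_nhds
    filter_upwards [Metric.ball_mem_nhds (0:ℝ) one_pos] with ξ hξ
    simpa [Real.dist_eq] using hξ
  -- pointwise structure facts
  have hzre : ∀ ξ : ℝ, (z ξ).re = Real.cos ξ := by
    intro ξ; simp [hz, Complex.exp_re]
  have hzim : ∀ ξ : ℝ, (z ξ).im = -Real.sin ξ := by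
    intro ξ; simp [hz, Complex.exp_im]
  have hcos : ∀ ξ : ℝ, ξ ≠ 0 → |ξ| < 1 → Real.cos ξ < 1 := by
    intro ξ h1 h2
    rcases lt_or_eq_of_le (Real.cos_le_one ξ) with h | h
    · exact h
    · exfalso
      have hpi := Real.pi_gt_three
      rw [abs_lt] at h2
      have := (Real.cos_eq_one_iff_of_lt_of_lt (by linarith) (by linarith)).mp h
      exact h1 this
  have hune : ∀ ξ : ℝ, ξ ≠ 0 → |ξ| < 1 → u ξ ≠ 0 := by
    intro ξ h1 h2 h
    have : (u ξ).re = 0 := by rw [h]; simp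
    rw [hudef] at this
    simp only [Complex.sub_re, Complex.one_re, hzre] at this
    have := hcos ξ h1 h2
    linarith
  -- tendsto abs u → 0 within
  have hucont : Continuous (fun ξ : ℝ => ‖u ξ‖) := by
    apply continuous_norm.comp
    exact continuous_const.sub (Complex.continuous_exp.comp (by continuity))
  have hu0 : ‖u 0‖ = 0 := by
    simp [hudef, hz]
  have hutend : Tendsto (fun ξ : ℝ => ‖u ξ‖) l (nhds 0) := by
    have := hucont.continuousAt (x := 0)
    rw [ContinuousAt, hu0] at this
    exact this.mono_left nhdsWithin_le_nhds
  have huabs1 : ∀ᶠ ξ in l, ‖u ξ‖ < 1 := hutend.eventually_lt_const one_pos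
  have hupunct : Tendsto (fun ξ : ℝ => ‖u ξ‖) l (nhdsWithin 0 {0}ᶜ) := by
    rw [tendsto_nhdsWithin_iff]
    refine ⟨hutend, ?_⟩
    filter_upwards [hξ0, hξ1] with ξ h1 h2
    simpa using (norm_ne_zero_iff.mpr (hune ξ h1 h2))
  have hlogu : Tendsto (fun ξ : ℝ => Real.log (‖u ξ‖)) l atBot :=
    Real.tendsto_log_nhdsNE_zero.comp hupunct
  have hdenom : Tendsto (fun ξ : ℝ => 1 - Real.log (‖u ξ‖)) l atTop := by
    have h1 : Tendsto (fun ξ : ℝ => -Real.log (‖u ξ‖)) l atTop :=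
      tendsto_neg_atTop_iff.mpr hlogu
    have := tendsto_atTop_add_const_left l 1 h1
    simpa [sub_eq_add_neg] using this
  have hb : Tendsto (fun ξ : ℝ => π / (1 - Real.log (‖u ξ‖))) l (nhds 0) :=
    Filter.Tendsto.div_atTop tendsto_const_nhds hdenom
  have ha : Tendsto (fun ξ : ℝ => Real.sqrt (1 - Real.cos ξ)) l (nhds 0) := by
    have hc : Continuous (fun ξ : ℝ => Real.sqrt (1 - Real.cos ξ)) := by continuity
    have := hc.continuousAt (x := 0)
    rw [ContinuousAt] at this
    simp only [Real.cos_zero, sub_self, Real.sqrt_zero] at this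
    exact this.mono_left nhdsWithin_le_nhds
  have hsum : Tendsto (fun ξ : ℝ => Real.sqrt (1 - Real.cos ξ)
      + π / (1 - Real.log (‖u ξ‖))) l (nhds 0) := by
    simpa using ha.add hb
  -- the closed form of w
  have hwform : ∀ᶠ ξ in l, 1 - logProbFourier ξ = u ξ * v ξ := by
    filter_upwards [hξ0, hξ1] with ξ h1 h2
    rw [closed_form ξ h1 h2, hudef, hvdef]
    simp only [hz]
    ring
  -- key bound
  have hbound : ∀ᶠ ξ in l, |(1 - logProbFourier ξ).re / ‖1 - logProbFourier ξ‖|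
      ≤ Real.sqrt (1 - Real.cos ξ) + π / (1 - Real.log (‖u ξ‖)) := by
    filter_upwards [hξ0, hξ1, huabs1, hwform] with ξ h1 h2 h3 hw
    rw [hw]
    set t := 1 - Real.cos ξ with htdef
    have htpos : 0 < t := by have := hcos ξ h1 h2; simp [htdef]; linarith
    have hure : (u ξ).re = t := by simp [hudef, hzre, htdef]
    have huim : (u ξ).im = Real.sin ξ := by simp [hudef, hzim]
    have habsu : ‖u ξ‖ = Real.sqrt (2 * t) := by
      rw [Complex.norm_def, Complex.normSq_apply, hure, huim]
      congr 1
      have := Real.sin_sq_add_cos_sq ξ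
      simp only [htdef]
      nlinarith
    have habsu_pos : 0 < ‖u ξ‖ := by
      rw [habsu]; exact Real.sqrt_pos.mpr (by linarith)
    have hvre : (v ξ).re = 1 - Real.log (‖u ξ‖) := by
      simp [hvdef, Complex.log_re]
    have hvim : (v ξ).im = -Complex.arg (u ξ) := by
      simp [hvdef, Complex.log_im]
    have hlogneg : Real.log (‖u ξ‖) < 0 := Real.log_neg habsu_pos h3
    have hvre_pos : (0:ℝ) < (v ξ).re := by rw [hvre]; linarith
    have habsv_pos : 0 < ‖v ξ‖ := by
      apply norm_pos_iff.mpr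
      intro h
      rw [h] at hvre_pos; simp at hvre_pos
    -- numerator bound
    have him_le : |(v ξ).im| ≤ π := by
      rw [hvim, abs_neg]; exact Complex.abs_arg_le_pi _
    have hre_le_abs_v : (v ξ).re ≤ ‖v ξ‖ := Complex.re_le_norm _
    have huim_le : |(u ξ).im| ≤ ‖u ξ‖ := Complex.abs_im_le_norm _
    have hmulabs : ‖u ξ * v ξ‖ = ‖u ξ‖ * ‖v ξ‖ :=
      norm_mul _ _
    have hnum : |(u ξ * v ξ).re| ≤ t * (v ξ).re + ‖u ξ‖ * π := by
      rw [Complex.mul_re, hure]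
      calc |t * (v ξ).re - (u ξ).im * (v ξ).im|
          ≤ |t * (v ξ).re| + |(u ξ).im * (v ξ).im| := abs_sub _ _
        _ = t * (v ξ).re + |(u ξ).im| * |(v ξ).im| := by
            rw [abs_mul, abs_mul, abs_of_nonneg htpos.le, abs_of_nonneg hvre_pos.le]
        _ ≤ t * (v ξ).re + ‖u ξ‖ * π := by
            gcongr
    -- divide
    rw [abs_div, hmulabs, abs_of_nonneg (by positivity : (0:ℝ) ≤ ‖u ξ‖ * ‖v ξ‖)]
    rw [div_le_iff₀ (by positivity)]
    have hstep1 : t ≤ Real.sqrt t * ‖u ξ‖ := by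
      rw [habsu]
      calc t = Real.sqrt (t ^ 2) := (Real.sqrt_sq htpos.le).symm
        _ ≤ Real.sqrt (t * (2 * t)) := Real.sqrt_le_sqrt (by nlinarith)
        _ = Real.sqrt t * Real.sqrt (2 * t) := Real.sqrt_mul htpos.le _
    calc |(u ξ * v ξ).re| ≤ t * (v ξ).re + ‖u ξ‖ * π := hnum
      _ ≤ (Real.sqrt t * ‖u ξ‖) * (v ξ).re
          + (π / (v ξ).re) * ((v ξ).re * ‖u ξ‖) := by
          have e : (π / (v ξ).re) * ((v ξ).re * ‖u ξ‖) = ‖u ξ‖ * π := by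
            field_simp
          rw [e]
          gcongr
      _ ≤ (Real.sqrt t * ‖u ξ‖) * ‖v ξ‖
          + (π / (v ξ).re) * (‖v ξ‖ * ‖u ξ‖) := by
          gcongr <;> positivity
      _ = (Real.sqrt t + π / (v ξ).re) * (‖u ξ‖ * ‖v ξ‖) := by ring
      _ = (Real.sqrt (1 - Real.cos ξ) + π / (1 - Real.log (‖u ξ‖)))
          * (‖u ξ‖ * ‖v ξ‖) := by rw [← htdef, ← hvre]
  -- w ≠ 0 eventually
  have hwne : ∀ᶠ ξ in l, (1 - logProbFourier ξ) ≠ 0 := by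
    filter_upwards [hξ0, hξ1, huabs1, hwform] with ξ h1 h2 h3 hw
    rw [hw]
    apply mul_ne_zero (hune ξ h1 h2)
    intro h
    have habsu_pos : 0 < ‖u ξ‖ := norm_pos_iff.mpr (hune ξ h1 h2)
    have hvre : (v ξ).re = 1 - Real.log (‖u ξ‖) := by
      simp [hvdef, Complex.log_re]
    have hlogneg : Real.log (‖u ξ‖) < 0 := Real.log_neg habsu_pos h3
    rw [h] at hvre
    simp at hvre
    linarith
  -- ratio tends to 0
  have hr : Tendsto (fun ξ : ℝ => (1 - logProbFourier ξ).re
      / ‖1 - logProbFourier ξ‖) l (nhds 0) := by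
    apply squeeze_zero_norm' _ hsum
    filter_upwards [hbound] with ξ h
    simpa only [Real.norm_eq_abs] using h
  -- conclude
  have harccos : Tendsto (fun ξ : ℝ => Real.arccos ((1 - logProbFourier ξ).re
      / ‖1 - logProbFourier ξ‖)) l (nhds (π / 2)) := by
    have := (Real.continuous_arccos.continuousAt (x := 0)).tendsto.comp hr
    rw [Real.arccos_zero] at this
    exact this
  apply harccos.congr'
  filter_upwards [hwne] with ξ h
  exact (abs_arg_eq h).symm
end

section
/- Let F be an aperiodic probability on ℤ with finite second moment ∑_k k² F(k) < ∞ and mean a := ∑_k k F(k). Then there exist β ∈ (0,1) and b > 0 such that the element F_β := β^{-1}(F - (1-β)δ₀) of ℓ¹(ℤ) satisfies |F̂_β(ξ)| ≤ 1 - bξ² for all ξ ∈ [-π,π]. -/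
open Real

/-- The `ℤ`-Fourier transform of a summable function on `ℤ`:
`F̂(ξ) = ∑_{k∈ℤ} F(k) e^{-ikξ}`. -/
noncomputable def zFourierFn (F : ℤ → ℝ) (ξ : ℝ) : ℂ :=
  ∑' k : ℤ, (F k : ℂ) * Complex.exp (-Complex.I * k * ξ)

lemma zf_exp_eq (k : ℤ) (ξ : ℝ) :
    Complex.exp (-Complex.I * k * ξ) = Complex.exp ((↑(-(k * ξ)) : ℝ) * Complex.I) := by
  congr 1; push_cast; ring

lemma zf_abs_exp (k : ℤ) (ξ : ℝ) : ‖Complex.exp (-Complex.I * k * ξ)‖ = 1 := by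
  rw [zf_exp_eq, Complex.norm_exp_ofReal_mul_I]

lemma zf_re_exp (k : ℤ) (ξ : ℝ) : (Complex.exp (-Complex.I * k * ξ)).re = Real.cos (k * ξ) := by
  rw [zf_exp_eq, Complex.exp_ofReal_mul_I_re, Real.cos_neg]

lemma zf_summable (F : ℤ → ℝ) (hF : Summable F) (ξ : ℝ) :
    Summable (fun k : ℤ => (F k : ℂ) * Complex.exp (-Complex.I * k * ξ)) := by
  apply Summable.of_norm_bounded hF.abs
  intro k
  rw [norm_mul, zf_abs_exp, mul_one,
    Complex.norm_real, Real.norm_eq_abs]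

lemma zf_mul_bounded_summable (F : ℤ → ℝ) (hF : Summable F) (hpos : ∀ k, 0 ≤ F k)
    (g : ℤ → ℝ) (C : ℝ) (hg : ∀ k, |g k| ≤ C) : Summable (fun k : ℤ => F k * g k) := by
  apply Summable.of_norm_bounded (hF.mul_right C)
  intro k
  rw [Real.norm_eq_abs, abs_mul, abs_of_nonneg (hpos k)]
  exact mul_le_mul_of_nonneg_left (hg k) (hpos k)

lemma zf_abs_le_one (F : ℤ → ℝ) (hpos : ∀ k, 0 ≤ F k) (hsum : HasSum F 1) (ξ : ℝ) :
    ‖zFourierFn F ξ‖ ≤ 1 := by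
  have h := norm_tsum_le_tsum_norm (f := fun k : ℤ => (F k : ℂ) * Complex.exp (-Complex.I * k * ξ)) ?_
  · refine h.trans ?_
    have : ∀ k : ℤ, ‖(F k : ℂ) * Complex.exp (-Complex.I * k * ξ)‖ = F k := by
      intro k
      rw [norm_mul, zf_abs_exp, mul_one,
        Complex.norm_real, Real.norm_eq_abs, abs_of_nonneg (hpos k)]
    have e1 : ∑' k : ℤ, ‖(F k : ℂ) * Complex.exp (-Complex.I * k * ξ)‖ = ∑' k : ℤ, F k := by
      simp only [this]
    rw [e1, hsum.tsum_eq]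
  · apply Summable.congr hsum.summable.abs
    intro k
    rw [norm_mul, zf_abs_exp, mul_one,
      Complex.norm_real, Real.norm_eq_abs]

lemma zf_re (F : ℤ → ℝ) (hF : Summable F) (ξ : ℝ) :
    (zFourierFn F ξ).re = ∑' k : ℤ, F k * Real.cos (k * ξ) := by
  rw [zFourierFn, Complex.re_tsum (zf_summable F hF ξ)]
  congr 1; funext k
  rw [Complex.mul_re, Complex.ofReal_re, Complex.ofReal_im, zero_mul, sub_zero, zf_re_exp]

lemma zf_conj (F : ℤ → ℝ) (ξ : ℝ) :
    (starRingEnd ℂ) (zFourierFn F ξ) =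
      ∑' j : ℤ, (F j : ℂ) * Complex.exp (Complex.I * j * ξ) := by
  have hst : (starRingEnd ℂ) (zFourierFn F ξ) = star (zFourierFn F ξ) := rfl
  rw [hst, zFourierFn, tsum_star]
  congr 1; funext j
  rw [star_mul', RCLike.star_def, Complex.conj_ofReal, ← Complex.exp_conj]
  congr 2
  simp [map_mul, Complex.conj_I, Complex.conj_ofReal]

lemma zf_inner (F : ℤ → ℝ) (hF : Summable F) (ξ : ℝ) (k : ℤ) :
    (Complex.exp (-Complex.I * k * ξ) * (starRingEnd ℂ) (zFourierFn F ξ)).re =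
      ∑' j : ℤ, F j * Real.cos (((k : ℝ) - j) * ξ) := by
  rw [zf_conj, ← tsum_mul_left]
  have hs : Summable (fun j : ℤ =>
      Complex.exp (-Complex.I * k * ξ) * ((F j : ℂ) * Complex.exp (Complex.I * j * ξ))) := by
    apply Summable.of_norm_bounded hF.abs
    intro j
    rw [norm_mul, norm_mul,
      zf_abs_exp, one_mul, Complex.norm_real, Real.norm_eq_abs]
    have : ‖Complex.exp (Complex.I * j * ξ)‖ = 1 := by
      have := zf_abs_exp (-j) ξ
      push_cast at this ⊢
      rw [show Complex.I * (j:ℂ) * (ξ:ℂ) = -Complex.I * (-(j:ℂ)) * ξ by ring]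
      exact this
    rw [this, mul_one]
  rw [Complex.re_tsum hs]
  congr 1; funext j
  have he : Complex.exp (-Complex.I * k * ξ) * ((F j : ℂ) * Complex.exp (Complex.I * j * ξ))
      = (F j : ℂ) * Complex.exp (-Complex.I * (k - j : ℤ) * ξ) := by
    rw [mul_left_comm, ← Complex.exp_add]
    congr 1
    push_cast
    ring
  rw [he, Complex.mul_re, Complex.ofReal_re, Complex.ofReal_im, zero_mul, sub_zero, zf_re_exp]
  push_cast
  ring_nf

lemma zf_normSq (F : ℤ → ℝ) (hF : Summable F) (hpos : ∀ k, 0 ≤ F k) (ξ : ℝ) :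
    Complex.normSq (zFourierFn F ξ) =
      ∑' k : ℤ, F k * ∑' j : ℤ, F j * Real.cos (((k : ℝ) - j) * ξ) := by
  have h1 : (Complex.normSq (zFourierFn F ξ) : ℂ) =
      zFourierFn F ξ * (starRingEnd ℂ) (zFourierFn F ξ) := (Complex.mul_conj _).symm
  have h2 : zFourierFn F ξ * (starRingEnd ℂ) (zFourierFn F ξ) =
      ∑' k : ℤ, (F k : ℂ) * Complex.exp (-Complex.I * k * ξ)
        * (starRingEnd ℂ) (zFourierFn F ξ) := by
    rw [tsum_mul_right]; rfl
  have hs : Summable (fun k : ℤ => (F k : ℂ) * Complex.exp (-Complex.I * k * ξ)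
      * (starRingEnd ℂ) (zFourierFn F ξ)) := (zf_summable F hF ξ).mul_right _
  have := congrArg Complex.re (h1.trans h2)
  rw [Complex.ofReal_re, Complex.re_tsum hs] at this
  rw [this]
  congr 1; funext k
  rw [mul_assoc, Complex.mul_re, Complex.ofReal_re, Complex.ofReal_im, zero_mul, sub_zero,
    zf_inner F hF ξ k]

lemma zf_cos_summable (F : ℤ → ℝ) (hF : Summable F) (hpos : ∀ k, 0 ≤ F k) (g : ℤ → ℝ) :
    Summable (fun j : ℤ => F j * Real.cos (g j)) :=
  zf_mul_bounded_summable F hF hpos _ 1 (fun k => Real.abs_cos_le_one _)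

lemma zf_one_sub_cos_summable (F : ℤ → ℝ) (hF : Summable F) (hpos : ∀ k, 0 ≤ F k) (g : ℤ → ℝ) :
    Summable (fun j : ℤ => F j * (1 - Real.cos (g j))) := by
  refine zf_mul_bounded_summable F hF hpos _ 2 (fun k => ?_)
  rw [abs_le]
  constructor <;> nlinarith [Real.neg_one_le_cos (g k), Real.cos_le_one (g k)]

/-- inner sum abs bound -/
lemma zf_inner_abs_le (F : ℤ → ℝ) (hF : Summable F) (hpos : ∀ k, 0 ≤ F k)
    (hsum : HasSum F 1) (g : ℤ → ℝ) :
    |∑' j : ℤ, F j * Real.cos (g j)| ≤ 1 := by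
  have h := norm_tsum_le_tsum_norm (f := fun j : ℤ => F j * Real.cos (g j))
    ((zf_cos_summable F hF hpos g).abs.congr (fun j => (Real.norm_eq_abs _).symm))
  rw [Real.norm_eq_abs] at h
  refine h.trans ?_
  have h2 : ∀ j : ℤ, ‖F j * Real.cos (g j)‖ ≤ F j := by
    intro j
    rw [Real.norm_eq_abs, abs_mul, abs_of_nonneg (hpos j)]
    exact mul_le_mul_of_nonneg_left (Real.abs_cos_le_one _) (hpos j) |>.trans (by rw [mul_one])
  calc ∑' j : ℤ, ‖F j * Real.cos (g j)‖ ≤ ∑' j : ℤ, F j :=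
        Summable.tsum_le_tsum h2 ((zf_cos_summable F hF hpos g).abs.congr
          (fun j => (Real.norm_eq_abs _).symm)) hF
    _ = 1 := hsum.tsum_eq

lemma zf_one_sub_normSq (F : ℤ → ℝ) (hpos : ∀ k, 0 ≤ F k) (hsum : HasSum F 1) (ξ : ℝ) :
    1 - Complex.normSq (zFourierFn F ξ) =
      ∑' k : ℤ, F k * ∑' j : ℤ, F j * (1 - Real.cos (((k : ℝ) - j) * ξ)) := by
  have hF := hsum.summable
  have hinner : ∀ k : ℤ, ∑' j : ℤ, F j * (1 - Real.cos (((k : ℝ) - j) * ξ))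
      = 1 - ∑' j : ℤ, F j * Real.cos (((k : ℝ) - j) * ξ) := by
    intro k
    have : ∀ j : ℤ, F j * (1 - Real.cos (((k : ℝ) - j) * ξ))
        = F j - F j * Real.cos (((k : ℝ) - j) * ξ) := fun j => by ring
    rw [tsum_congr this, Summable.tsum_sub hF (zf_cos_summable F hF hpos _), hsum.tsum_eq]
  have hrw : ∀ k : ℤ, F k * ∑' j : ℤ, F j * (1 - Real.cos (((k : ℝ) - j) * ξ))
      = F k - F k * ∑' j : ℤ, F j * Real.cos (((k : ℝ) - j) * ξ) := by
    intro k; rw [hinner k]; ring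
  rw [tsum_congr hrw, Summable.tsum_sub hF
    (zf_mul_bounded_summable F hF hpos _ 1 (fun k => zf_inner_abs_le F hF hpos hsum _)),
    hsum.tsum_eq, zf_normSq F hF hpos ξ]

lemma zf_continuous (F : ℤ → ℝ) (hF : Summable F) : Continuous (fun ξ => zFourierFn F ξ) := by
  apply continuous_tsum (u := fun k => |F k|) ?_ hF.abs
  · intro k ξ
    rw [norm_mul, zf_abs_exp, mul_one,
      Complex.norm_real, Real.norm_eq_abs]
  · intro k
    exact continuous_const.mul (Complex.continuous_exp.comp
      ((continuous_const.mul Complex.continuous_ofReal)))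

/-- upper bound on 1 - Re F̂ via second moment -/
lemma zf_u_le (F : ℤ → ℝ) (hpos : ∀ k, 0 ≤ F k) (hsum : HasSum F 1)
    (hmom : Summable fun k : ℤ => (k : ℝ) ^ 2 * F k) (ξ : ℝ) :
    1 - (zFourierFn F ξ).re ≤ (∑' k : ℤ, (k : ℝ) ^ 2 * F k) / 2 * ξ ^ 2 := by
  have hF := hsum.summable
  rw [zf_re F hF ξ]
  have h1 : 1 - ∑' k : ℤ, F k * Real.cos (k * ξ)
      = ∑' k : ℤ, F k * (1 - Real.cos ((k : ℝ) * ξ)) := by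
    have : ∀ k : ℤ, F k * (1 - Real.cos ((k : ℝ) * ξ)) = F k - F k * Real.cos (k * ξ) :=
      fun k => by ring
    rw [tsum_congr this, Summable.tsum_sub hF (zf_cos_summable F hF hpos _), hsum.tsum_eq]
  rw [h1]
  have hs2 : Summable (fun k : ℤ => ξ ^ 2 / 2 * ((k : ℝ) ^ 2 * F k)) := hmom.mul_left _
  have hle : ∀ k : ℤ, F k * (1 - Real.cos ((k : ℝ) * ξ)) ≤ ξ ^ 2 / 2 * ((k : ℝ) ^ 2 * F k) := by
    intro k
    have hc := Real.one_sub_sq_div_two_le_cos (x := (k : ℝ) * ξ)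
    have h2 : 1 - Real.cos ((k : ℝ) * ξ) ≤ ((k : ℝ) * ξ) ^ 2 / 2 := by linarith
    have := mul_le_mul_of_nonneg_left h2 (hpos k)
    calc F k * (1 - Real.cos ((k : ℝ) * ξ)) ≤ F k * (((k : ℝ) * ξ) ^ 2 / 2) := this
      _ = ξ ^ 2 / 2 * ((k : ℝ) ^ 2 * F k) := by ring
  calc ∑' k : ℤ, F k * (1 - Real.cos ((k : ℝ) * ξ))
      ≤ ∑' k : ℤ, ξ ^ 2 / 2 * ((k : ℝ) ^ 2 * F k) :=
        Summable.tsum_le_tsum hle (zf_one_sub_cos_summable F hF hpos _) hs2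
    _ = ξ ^ 2 / 2 * ∑' k : ℤ, (k : ℝ) ^ 2 * F k := tsum_mul_left
    _ = (∑' k : ℤ, (k : ℝ) ^ 2 * F k) / 2 * ξ ^ 2 := by ring

/-- the shift identity -/
lemma zf_shift (F : ℤ → ℝ) (hF : Summable F) (β ξ : ℝ) :
    zFourierFn (fun k => β⁻¹ * (F k - (if k = 0 then 1 - β else 0))) ξ
      = (β⁻¹ : ℂ) * (zFourierFn F ξ - ((1 : ℂ) - β)) := by
  have hδ : Summable (fun k : ℤ =>
      ((if k = 0 then 1 - β else 0 : ℝ) : ℂ) * Complex.exp (-Complex.I * k * ξ)) := by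
    apply summable_of_ne_finset_zero (s := {0})
    intro k hk
    simp only [Finset.mem_singleton] at hk
    simp [hk]
  have hδsum : ∑' k : ℤ, ((if k = 0 then 1 - β else 0 : ℝ) : ℂ)
      * Complex.exp (-Complex.I * k * ξ) = (1 : ℂ) - β := by
    rw [tsum_eq_single 0 (by intro k hk; simp [hk])]
    simp
  rw [zFourierFn, zFourierFn]
  have hterm : ∀ k : ℤ, ((β⁻¹ * (F k - (if k = 0 then 1 - β else 0)) : ℝ) : ℂ)
      * Complex.exp (-Complex.I * k * ξ)
      = (β⁻¹ : ℂ) * ((F k : ℂ) * Complex.exp (-Complex.I * k * ξ)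
        - ((if k = 0 then 1 - β else 0 : ℝ) : ℂ) * Complex.exp (-Complex.I * k * ξ)) := by
    intro k
    push_cast
    ring
  rw [tsum_congr hterm, tsum_mul_left, Summable.tsum_sub (zf_summable F hF ξ) hδ, hδsum]

set_option maxHeartbeats 2000000 in
/-- if `F` is an aperiodic probability on `ℤ` with finite second moment,
then there are `β ∈ (0,1)` and `b > 0` such that `F_β := β⁻¹(F - (1-β)δ₀)` satisfies
`|F̂_β(ξ)| ≤ 1 - bξ²` for all `ξ ∈ [-π,π]`. -/
theorem aperiodic_second_moment_bound (F : ℤ → ℝ)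
    (hpos : ∀ k, 0 ≤ F k) (hsum : HasSum F 1)
    (hmom : Summable fun k : ℤ => (k : ℝ) ^ 2 * F k)
    (haper : AddSubgroup.closure
      {d : ℤ | ∃ k k', F k ≠ 0 ∧ F k' ≠ 0 ∧ d = k - k'} = ⊤) :
    ∃ β ∈ Set.Ioo (0 : ℝ) 1, ∃ b > (0 : ℝ), ∀ ξ ∈ Set.Icc (-π) π,
      ‖zFourierFn
          (fun k => β⁻¹ * (F k - (if k = 0 then 1 - β else 0))) ξ‖ ≤ 1 - b * ξ ^ 2 := by
  have hF := hsum.summable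
  -- a pair of distinct support points
  obtain ⟨k₀, j₀, hk₀, hj₀, hne⟩ : ∃ k₀ j₀ : ℤ, F k₀ ≠ 0 ∧ F j₀ ≠ 0 ∧ k₀ ≠ j₀ := by
    by_contra h
    push_neg at h
    have hsub : {d : ℤ | ∃ k k', F k ≠ 0 ∧ F k' ≠ 0 ∧ d = k - k'} ⊆ (⊥ : AddSubgroup ℤ) := by
      rintro d ⟨k, k', hk, hk', rfl⟩
      have := h k k' hk hk'
      simp [AddSubgroup.mem_bot, this]
    have hle : (⊤ : AddSubgroup ℤ) ≤ ⊥ := haper ▸ (AddSubgroup.closure_le ⊥).mpr hsub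
    have h1 : (1 : ℤ) ∈ (⊥ : AddSubgroup ℤ) := hle trivial
    simp [AddSubgroup.mem_bot] at h1
  set d₀ : ℤ := k₀ - j₀ with hd₀
  have hd₀ne : d₀ ≠ 0 := sub_ne_zero.mpr hne
  have habsd : (1 : ℝ) ≤ |(d₀ : ℝ)| := by
    have := Int.one_le_abs hd₀ne
    calc (1:ℝ) ≤ ((|d₀| : ℤ) : ℝ) := by exact_mod_cast this
      _ = |(d₀ : ℝ)| := by push_cast; rfl
  have habsd0 : (0:ℝ) < |(d₀ : ℝ)| := by linarith
  set δ : ℝ := π / |(d₀ : ℝ)| with hδ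
  have hδpos : 0 < δ := div_pos pi_pos habsd0
  have hδle : δ ≤ π := div_le_self pi_pos.le habsd
  have hFk₀ : 0 < F k₀ := (hpos k₀).lt_of_ne' hk₀
  have hFj₀ : 0 < F j₀ := (hpos j₀).lt_of_ne' hj₀
  set p : ℝ := F k₀ * F j₀ with hp
  have hppos : 0 < p := mul_pos hFk₀ hFj₀
  -- inner-sum bounds
  have hg0 : ∀ (ξ : ℝ) (k : ℤ), 0 ≤ ∑' j : ℤ, F j * (1 - Real.cos (((k:ℝ) - j) * ξ)) := by
    intro ξ k
    exact tsum_nonneg fun j => mul_nonneg (hpos j)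
      (by linarith only [Real.cos_le_one (((k:ℝ) - j) * ξ)])
  have hg2 : ∀ (ξ : ℝ) (k : ℤ), (∑' j : ℤ, F j * (1 - Real.cos (((k:ℝ) - j) * ξ))) ≤ 2 := by
    intro ξ k
    calc (∑' j : ℤ, F j * (1 - Real.cos (((k:ℝ) - j) * ξ)))
        ≤ ∑' j : ℤ, F j * 2 := by
          refine Summable.tsum_le_tsum (fun j => ?_) (zf_one_sub_cos_summable F hF hpos (fun j => ((k:ℝ) - j) * ξ)) (hF.mul_right 2)
          exact mul_le_mul_of_nonneg_left
            (by linarith only [Real.neg_one_le_cos (((k:ℝ) - j) * ξ)]) (hpos j)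
      _ = 2 := by rw [tsum_mul_right, hsum.tsum_eq, one_mul]
  have houter : ∀ ξ : ℝ, Summable
      (fun k : ℤ => F k * ∑' j : ℤ, F j * (1 - Real.cos (((k:ℝ) - j) * ξ))) := by
    intro ξ
    exact zf_mul_bounded_summable F hF hpos _ 2
      (fun k => abs_le.mpr ⟨by linarith [hg0 ξ k], hg2 ξ k⟩)
  -- single-term lower bound
  have hsingle : ∀ ξ : ℝ, p * (1 - Real.cos ((d₀:ℝ) * ξ))
      ≤ 1 - Complex.normSq (zFourierFn F ξ) := by
    intro ξ
    rw [zf_one_sub_normSq F hpos hsum ξ]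
    have h1 : F j₀ * (1 - Real.cos (((k₀:ℝ) - j₀) * ξ))
        ≤ ∑' j : ℤ, F j * (1 - Real.cos (((k₀:ℝ) - j) * ξ)) := by
      refine Summable.le_tsum (zf_one_sub_cos_summable F hF hpos (fun j => ((k₀:ℝ) - j) * ξ)) j₀ (fun j _ => ?_)
      exact mul_nonneg (hpos j) (by linarith only [Real.cos_le_one (((k₀:ℝ) - j) * ξ)])
    have h2 : F k₀ * ∑' j : ℤ, F j * (1 - Real.cos (((k₀:ℝ) - j) * ξ))
        ≤ ∑' k : ℤ, F k * ∑' j : ℤ, F j * (1 - Real.cos (((k:ℝ) - j) * ξ)) :=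
      Summable.le_tsum (houter ξ) k₀ (fun k _ => mul_nonneg (hpos k) (hg0 ξ k))
    have h3 : p * (1 - Real.cos ((d₀:ℝ) * ξ))
        = F k₀ * (F j₀ * (1 - Real.cos (((k₀:ℝ) - j₀) * ξ))) := by
      rw [hp, hd₀]; push_cast; ring
    rw [h3]
    exact (mul_le_mul_of_nonneg_left h1 hFk₀.le).trans h2
  -- near-zero bound
  set c₁ : ℝ := p * (2 / π ^ 2 * (d₀:ℝ) ^ 2) with hc₁
  have hd2 : (1:ℝ) ≤ (d₀:ℝ) ^ 2 := by
    have h := mul_le_mul habsd habsd zero_le_one (abs_nonneg (d₀:ℝ))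
    have h2 := sq_abs (d₀:ℝ)
    nlinarith only [h, h2]
  have hc₁pos : 0 < c₁ := by
    rw [hc₁]
    have h2 : (0:ℝ) < 2 / π ^ 2 := by positivity
    exact mul_pos hppos (mul_pos h2 (lt_of_lt_of_le one_pos hd2))
  have hnear : ∀ ξ : ℝ, |ξ| ≤ δ → c₁ * ξ ^ 2 ≤ 1 - Complex.normSq (zFourierFn F ξ) := by
    intro ξ hξ
    refine le_trans ?_ (hsingle ξ)
    have habs : |(d₀:ℝ) * ξ| ≤ π := by
      rw [abs_mul]
      calc |(d₀:ℝ)| * |ξ| ≤ |(d₀:ℝ)| * δ := mul_le_mul_of_nonneg_left hξ (abs_nonneg _)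
        _ = π := by rw [hδ, mul_div_cancel₀ _ (ne_of_gt habsd0)]
    have hcos := Real.cos_le_one_sub_mul_cos_sq habs
    have h4 : 2 / π ^ 2 * ((d₀:ℝ) * ξ) ^ 2 ≤ 1 - Real.cos ((d₀:ℝ) * ξ) := by linarith
    calc c₁ * ξ ^ 2 = p * (2 / π ^ 2 * ((d₀:ℝ) * ξ) ^ 2) := by rw [hc₁]; ring
      _ ≤ p * (1 - Real.cos ((d₀:ℝ) * ξ)) := mul_le_mul_of_nonneg_left h4 hppos.le
  -- far region
  set K : Set ℝ := Set.Icc (-π) π ∩ {ξ : ℝ | δ ≤ |ξ|} with hK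
  have hKc : IsCompact K := isCompact_Icc.inter_right (isClosed_le continuous_const continuous_abs)
  have hKne : K.Nonempty := by
    refine ⟨π, ⟨⟨by linarith [pi_pos], le_refl _⟩, ?_⟩⟩
    rw [Set.mem_setOf_eq, abs_of_pos pi_pos]
    exact hδle
  have hcont : ContinuousOn (fun ξ => Complex.normSq (zFourierFn F ξ)) K :=
    (Complex.continuous_normSq.comp (zf_continuous F hF)).continuousOn
  obtain ⟨ξ₀, hξ₀K, hmax⟩ := hKc.exists_isMaxOn hKne hcont
  have hA_le_one : ∀ ξ : ℝ, Complex.normSq (zFourierFn F ξ) ≤ 1 := by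
    intro ξ
    rw [← Complex.sq_norm]
    have h := mul_self_le_mul_self (norm_nonneg (zFourierFn F ξ)) (zf_abs_le_one F hpos hsum ξ)
    nlinarith only [h]
  set ε : ℝ := 1 - Complex.normSq (zFourierFn F ξ₀) with hε
  have hε0 : 0 ≤ ε := by have := hA_le_one ξ₀; rw [hε]; linarith
  have hξδ : δ ≤ |ξ₀| := hξ₀K.2
  have hξ₀π : |ξ₀| ≤ π := abs_le.mpr ⟨hξ₀K.1.1, hξ₀K.1.2⟩
  have hεpos : 0 < ε := by
    rcases hε0.lt_or_eq with h | h
    · exact h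
    exfalso
    -- all support-pair cosines equal 1
    have hzero : 1 - Complex.normSq (zFourierFn F ξ₀) = 0 := by rw [← hε, ← h]
    have hpair : ∀ k k' : ℤ, F k ≠ 0 → F k' ≠ 0 → Real.cos (((k:ℝ) - k') * ξ₀) = 1 := by
      intro k k' hk hk'
      by_contra hcos
      have hclt : Real.cos (((k:ℝ) - k') * ξ₀) < 1 :=
        lt_of_le_of_ne (Real.cos_le_one _) hcos
      have hFk : 0 < F k := (hpos k).lt_of_ne' hk
      have hFk' : 0 < F k' := (hpos k').lt_of_ne' hk'
      have h1 : 0 < F k' * (1 - Real.cos (((k:ℝ) - k') * ξ₀)) := mul_pos hFk' (by linarith only [hclt])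
      have h2 : F k' * (1 - Real.cos (((k:ℝ) - k') * ξ₀))
          ≤ ∑' j : ℤ, F j * (1 - Real.cos (((k:ℝ) - j) * ξ₀)) := by
        refine Summable.le_tsum (zf_one_sub_cos_summable F hF hpos (fun j => ((k:ℝ) - j) * ξ₀)) k' (fun j _ => ?_)
        exact mul_nonneg (hpos j) (by linarith only [Real.cos_le_one (((k:ℝ) - j) * ξ₀)])
      have h3 : F k * ∑' j : ℤ, F j * (1 - Real.cos (((k:ℝ) - j) * ξ₀))
          ≤ ∑' k'' : ℤ, F k'' * ∑' j : ℤ, F j * (1 - Real.cos (((k'':ℝ) - j) * ξ₀)) :=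
        Summable.le_tsum (houter ξ₀) k (fun k'' _ => mul_nonneg (hpos k'') (hg0 ξ₀ k''))
      have h4 := zf_one_sub_normSq F hpos hsum ξ₀
      have h5 : 0 < F k * ∑' j : ℤ, F j * (1 - Real.cos (((k:ℝ) - j) * ξ₀)) :=
        mul_pos hFk (lt_of_lt_of_le h1 h2)
      rw [hzero] at h4
      linarith only [h4, h5, h3]
    -- the subgroup of periods
    set S : AddSubgroup ℤ :=
      { carrier := {d : ℤ | ∃ n : ℤ, (n : ℝ) * (2 * π) = (d : ℝ) * ξ₀}
        zero_mem' := ⟨0, by simp⟩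
        add_mem' := by
          rintro a b ⟨n, hn⟩ ⟨m, hm⟩
          exact ⟨n + m, by push_cast; push_cast at hn hm; linarith only [hn, hm]⟩
        neg_mem' := by
          rintro a ⟨n, hn⟩
          exact ⟨-n, by push_cast; push_cast at hn; linarith only [hn]⟩ } with hS
    have hgen : {d : ℤ | ∃ k k', F k ≠ 0 ∧ F k' ≠ 0 ∧ d = k - k'} ⊆ (S : Set ℤ) := by
      rintro d ⟨k, k', hk, hk', rfl⟩
      have := hpair k k' hk hk'
      rw [Real.cos_eq_one_iff] at this
      obtain ⟨n, hn⟩ := this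
      exact ⟨n, by push_cast; linarith only [hn]⟩
    have hle : (⊤ : AddSubgroup ℤ) ≤ S := haper ▸ (AddSubgroup.closure_le S).mpr hgen
    obtain ⟨n, hn⟩ := hle (trivial : (1:ℤ) ∈ ⊤)
    have hn' : (n : ℝ) * (2 * π) = ξ₀ := by rw [hn]; push_cast; ring
    have hn0 : n ≠ 0 := by
      rintro rfl
      rw [show ((0:ℤ):ℝ) = 0 by norm_num, zero_mul] at hn'
      rw [← hn', abs_zero] at hξδ
      linarith only [hξδ, hδpos]
    have h1n : (1:ℝ) ≤ |(n:ℝ)| := by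
      have := Int.one_le_abs hn0
      calc (1:ℝ) ≤ ((|n| : ℤ) : ℝ) := by exact_mod_cast this
        _ = |(n : ℝ)| := by push_cast; rfl
    have : 2 * π ≤ |ξ₀| := by
      rw [← hn', abs_mul, abs_of_pos (by positivity : (0:ℝ) < 2 * π)]
      have h := mul_le_mul_of_nonneg_right h1n (by positivity : (0:ℝ) ≤ 2 * π)
      linarith only [h]
    linarith only [this, hξ₀π, pi_pos]
  have hfar : ∀ ξ ∈ K, ε ≤ 1 - Complex.normSq (zFourierFn F ξ) := by
    intro ξ hξ
    have := hmax hξ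
    simp only [Set.mem_setOf_eq] at this
    rw [hε]
    linarith only [this]
  -- combined quadratic lower bound
  set c : ℝ := min c₁ (ε / π ^ 2) with hc
  have hcpos : 0 < c := lt_min hc₁pos (div_pos hεpos (by positivity))
  have hmain : ∀ ξ ∈ Set.Icc (-π) π,
      c * ξ ^ 2 ≤ 1 - Complex.normSq (zFourierFn F ξ) := by
    intro ξ hξ
    have hξπ : |ξ| ≤ π := abs_le.mpr ⟨hξ.1, hξ.2⟩
    rcases le_or_gt |ξ| δ with hcase | hcase
    · exact le_trans (mul_le_mul_of_nonneg_right (min_le_left _ _) (sq_nonneg ξ)) (hnear ξ hcase)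
    · have hKξ : ξ ∈ K := ⟨hξ, hcase.le⟩
      refine le_trans ?_ (hfar ξ hKξ)
      have hξ2 : ξ ^ 2 ≤ π ^ 2 := by
        have h := mul_self_le_mul_self (abs_nonneg ξ) hξπ
        nlinarith only [h, sq_abs ξ]
      calc c * ξ ^ 2 ≤ ε / π ^ 2 * ξ ^ 2 :=
            mul_le_mul_of_nonneg_right (min_le_right _ _) (sq_nonneg _)
        _ ≤ ε / π ^ 2 * π ^ 2 := mul_le_mul_of_nonneg_left hξ2 (by positivity)
        _ = ε := by field_simp
  -- choose the constants
  set C₂ : ℝ := ∑' k : ℤ, (k:ℝ) ^ 2 * F k with hC₂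
  have hC₂0 : 0 ≤ C₂ := tsum_nonneg fun k => mul_nonneg (sq_nonneg _) (hpos k)
  set t : ℝ := c / (2 * (C₂ + 1)) with htdef
  have htpos : 0 < t := div_pos hcpos (by linarith)
  set β : ℝ := max (1/2 : ℝ) (1 - t) with hβdef
  have hβhalf : (1/2 : ℝ) ≤ β := le_max_left _ _
  have hβpos : 0 < β := by linarith only [hβhalf]
  have hβlt1 : β < 1 := max_lt (by norm_num) (by linarith only [htpos])
  have hβ1 : 1 - β ≤ t := by have h := le_max_right (1/2 : ℝ) (1 - t); linarith only [h, hβdef.ge, hβdef.le, h]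
  have h1β0 : 0 ≤ 1 - β := by linarith only [hβlt1]
  set b : ℝ := min (c/4) (1/π^2) with hbdef
  have hbpos : 0 < b := lt_min (by linarith only [hcpos]) (by positivity)
  refine ⟨β, ⟨hβpos, hβlt1⟩, b, hbpos, ?_⟩
  intro ξ hξ
  have hξπ : |ξ| ≤ π := abs_le.mpr ⟨hξ.1, hξ.2⟩
  have hξ2 : ξ ^ 2 ≤ π ^ 2 := by
    have h := mul_self_le_mul_self (abs_nonneg ξ) hξπ
    nlinarith only [h, sq_abs ξ]
  rw [zf_shift F hF β ξ, norm_mul]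
  have habsinv : ‖((β : ℂ))⁻¹‖ = β⁻¹ := by
    rw [norm_inv, Complex.norm_real, Real.norm_eq_abs, abs_of_pos hβpos]
  rw [habsinv]
  set z : ℂ := zFourierFn F ξ with hz
  set w : ℂ := z - ((1 : ℂ) - (β : ℝ)) with hw
  have hr_le : z.re ≤ 1 := (Complex.re_le_norm z).trans (zf_abs_le_one F hpos hsum ξ)
  have hu : 1 - z.re ≤ C₂ / 2 * ξ ^ 2 := by
    have := zf_u_le F hpos hsum hmom ξ
    rw [← hC₂] at this
    exact this
  have hAξ := hmain ξ hξ
  have hNs : Complex.normSq w = Complex.normSq z - 2 * (1 - β) * z.re + (1 - β) ^ 2 := by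
    rw [hw]
    simp [Complex.normSq_apply, Complex.sub_re, Complex.sub_im, Complex.one_re, Complex.one_im,
      Complex.ofReal_re, Complex.ofReal_im]
    ring
  have ht2 : 2 * t * C₂ + 2 * t = c := by
    rw [htdef]
    field_simp
  have hprod : (1 - β) * (1 - z.re) ≤ t * (C₂ / 2 * ξ ^ 2) :=
    mul_le_mul hβ1 hu (by linarith only [hr_le]) htpos.le
  have hNs_le : Complex.normSq w ≤ β ^ 2 - c / 2 * ξ ^ 2 := by
    have hid : Complex.normSq w
        = β ^ 2 - (1 - Complex.normSq z) + 2 * ((1 - β) * (1 - z.re)) := by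
      rw [hNs]; ring
    have haux : 0 ≤ (c / 2 - t * C₂) * ξ ^ 2 :=
      mul_nonneg (by linarith only [ht2, htpos]) (sq_nonneg ξ)
    have haux2 : (c / 2 - t * C₂) * ξ ^ 2
        = c / 2 * ξ ^ 2 - 2 * (t * (C₂ / 2 * ξ ^ 2)) := by ring
    linarith only [hid, hAξ, hprod, haux, haux2]
  have hw0 : 0 ≤ ‖w‖ := norm_nonneg w
  have hb1 : b * ξ ^ 2 ≤ 1 := by
    have h5 : b ≤ 1 / π ^ 2 := min_le_right _ _
    calc b * ξ ^ 2 ≤ 1 / π ^ 2 * ξ ^ 2 := mul_le_mul_of_nonneg_right h5 (sq_nonneg _)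
      _ ≤ 1 / π ^ 2 * π ^ 2 := mul_le_mul_of_nonneg_left hξ2 (by positivity)
      _ = 1 := by field_simp
  have hb2 : b ≤ c / 4 := min_le_left _ _
  have hinv1 : (1:ℝ) ≤ β⁻¹ := (one_le_inv₀ hβpos).mpr hβlt1.le
  have hinv2 : (1:ℝ) ≤ β⁻¹ ^ 2 := by
    have h := mul_le_mul hinv1 hinv1 zero_le_one (by linarith only [hinv1])
    nlinarith only [h]
  have hsq : (β⁻¹ * ‖w‖) ^ 2 ≤ (1 - b * ξ ^ 2) ^ 2 := by
    have e1 : (β⁻¹ * ‖w‖) ^ 2 = β⁻¹ ^ 2 * Complex.normSq w := by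
      rw [mul_pow, Complex.sq_norm]
    rw [e1]
    have e2 : β⁻¹ ^ 2 * Complex.normSq w ≤ β⁻¹ ^ 2 * (β ^ 2 - c / 2 * ξ ^ 2) :=
      mul_le_mul_of_nonneg_left hNs_le (by positivity)
    have e3 : β⁻¹ ^ 2 * (β ^ 2 - c / 2 * ξ ^ 2) = 1 - β⁻¹ ^ 2 * (c / 2 * ξ ^ 2) := by
      field_simp
    have e4 : c / 2 * ξ ^ 2 ≤ β⁻¹ ^ 2 * (c / 2 * ξ ^ 2) :=
      le_mul_of_one_le_left (mul_nonneg (by linarith only [hcpos]) (sq_nonneg _)) hinv2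
    have e5 : 0 ≤ (c / 4 - b) * ξ ^ 2 := mul_nonneg (by linarith only [hb2]) (sq_nonneg ξ)
    have e6 : (c / 4 - b) * ξ ^ 2 = c / 4 * ξ ^ 2 - b * ξ ^ 2 := by ring
    have e7 : (1 - b * ξ ^ 2) ^ 2 = 1 - 2 * (b * ξ ^ 2) + (b * ξ ^ 2) ^ 2 := by ring
    linarith only [e2, e3, e4, e5, e6, e7, sq_nonneg (b * ξ ^ 2)]
  exact (pow_le_pow_iff_left₀ (mul_nonneg (by positivity) hw0) (by linarith only [hb1]) two_ne_zero).mp hsq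
end
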